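/- Fix α ≥ 0 and for each even n ≥ 4 let V_n be the n×n real circulant symmetric matrix with v_0 = 1 + 2α, v_1 = v_{n−1} = −α and v_j = 0 otherwise, whose Fourier eigenvalues are Λ_k = 1 + 2α(1 − cos(2πk/n)) > 0. Let N(n) = (1/2) ∑_{k=0}^{n/2−1} |log₂((1 + 2α(1 + cos(2πk/n)))/(1 + 2α(1 − cos(2πk/n))))| be the logarithmic negativity between the even-indexed and odd-indexed oscillators. Then N(n)/n converges, as n → ∞ through even integers, to (1/(2π)) ∫_0^{π/2} log₂((1 + 2α(1 + cos x))/(1 + 2α(1 − cos x))) dx; in particular, for large n the log-negativity grows linearly in the chain length n. -/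

import Mathlib

open Real Filter intervalIntegral

lemma riemann01 (g : ℝ → ℝ) (hg : Continuous g) :
    Tendsto (fun n : ℕ => (1 / (n : ℝ)) * ∑ k ∈ Finset.range n, g (k / n)) atTop
      (nhds (∫ x in (0:ℝ)..1, g x)) := by
  rw [Metric.tendsto_atTop]
  intro ε hε
  have huc : UniformContinuousOn g (Set.Icc (0:ℝ) 1) :=
    isCompact_Icc.uniformContinuousOn_of_continuous hg.continuousOn
  rw [Metric.uniformContinuousOn_iff] at huc
  obtain ⟨δ, hδ, hδ'⟩ := huc (ε / 2) (by positivity)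
  obtain ⟨M, hM⟩ := exists_nat_gt (1 / δ)
  refine ⟨M + 1, fun n hn => ?_⟩
  have hn1 : 1 ≤ n := le_trans (Nat.le_add_left 1 M) hn
  have hnpos : (0:ℝ) < n := by exact_mod_cast hn1
  have hinv : 1 / (n:ℝ) < δ := by
    rw [div_lt_iff₀ hnpos]
    have : 1 / δ < (n:ℝ) := lt_of_lt_of_le hM (by exact_mod_cast le_trans (Nat.le_succ M) hn)
    calc (1:ℝ) = δ * (1/δ) := by field_simp
    _ < δ * n := by exact mul_lt_mul_of_pos_left this hδ
  -- adjacent intervals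
  have hint : ∀ k : ℕ, k < n → IntervalIntegrable g MeasureTheory.volume
      ((k:ℝ)/n) (((k+1:ℕ):ℝ)/n) := fun k _ => hg.intervalIntegrable _ _
  have hsplit : ∫ x in ((0:ℕ):ℝ)/n..((n:ℕ):ℝ)/n, g x
      = ∑ k ∈ Finset.range n, ∫ x in ((k:ℝ)/n)..(((k+1:ℕ):ℝ)/n), g x :=
    (sum_integral_adjacent_intervals (a := fun k : ℕ => (k:ℝ)/n) hint).symm
  have h01 : (∫ x in (0:ℝ)..1, g x)
      = ∑ k ∈ Finset.range n, ∫ x in ((k:ℝ)/n)..(((k+1:ℕ):ℝ)/n), g x := by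
    rw [← hsplit]
    norm_num [div_self (ne_of_gt hnpos)]
  rw [Real.dist_eq, h01, Finset.mul_sum, ← Finset.sum_sub_distrib]
  have key : ∀ k ∈ Finset.range n,
      |1 / (n:ℝ) * g (k / n) - ∫ x in ((k:ℝ)/n)..(((k+1:ℕ):ℝ)/n), g x| ≤ (ε/2) / n := by
    intro k hk
    have hk' : k < n := Finset.mem_range.mp hk
    have hconst : (1:ℝ) / n * g (k / n)
        = ∫ _ in ((k:ℝ)/n)..(((k+1:ℕ):ℝ)/n), g ((k:ℝ)/n) := by
      rw [integral_const]
      push_cast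
      ring_nf
    rw [hconst, ← integral_sub (intervalIntegrable_const) (hint k hk'), ← Real.norm_eq_abs]
    have hbound : ∀ x ∈ Set.uIoc ((k:ℝ)/n) (((k+1:ℕ):ℝ)/n),
        ‖g ((k:ℝ)/n) - g x‖ ≤ ε / 2 := by
      intro x hx
      rw [Set.uIoc_of_le (by apply div_le_div_of_nonneg_right _ hnpos.le; push_cast; linarith)] at hx
      have hx1 : (k:ℝ)/n < x := hx.1
      have hx2 : x ≤ ((k:ℝ)+1)/n := by push_cast at hx; exact hx.2
      have hkn : (k:ℝ) + 1 ≤ n := by exact_mod_cast hk'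
      have hxmem : x ∈ Set.Icc (0:ℝ) 1 := by
        constructor
        · exact le_trans (by positivity) hx1.le
        · calc x ≤ ((k:ℝ)+1)/n := hx2
            _ ≤ (n:ℝ)/n := by apply div_le_div_of_nonneg_right hkn hnpos.le
            _ = 1 := div_self (ne_of_gt hnpos)
      have hkmem : (k:ℝ)/n ∈ Set.Icc (0:ℝ) 1 := by
        constructor
        · positivity
        · calc (k:ℝ)/n ≤ (n:ℝ)/n := by
                apply div_le_div_of_nonneg_right (by exact_mod_cast hk'.le) hnpos.le
            _ = 1 := div_self (ne_of_gt hnpos)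
      have hd : dist ((k:ℝ)/n) x < δ := by
        rw [Real.dist_eq, abs_sub_comm, abs_of_nonneg (by linarith)]
        calc x - (k:ℝ)/n ≤ ((k:ℝ)+1)/n - (k:ℝ)/n := by linarith
          _ = 1/n := by field_simp; ring
          _ < δ := hinv
      have := hδ' _ hkmem _ hxmem hd
      rw [Real.dist_eq] at this
      exact le_of_lt this
    calc ‖∫ x in ((k:ℝ)/n)..(((k+1:ℕ):ℝ)/n), (g ((k:ℝ)/n) - g x)‖
        ≤ ε / 2 * |(((k+1:ℕ):ℝ)/n) - ((k:ℝ)/n)| :=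
          intervalIntegral.norm_integral_le_of_norm_le_const hbound
      _ = ε / 2 / n := by
          push_cast
          rw [show ((k:ℝ)+1)/n - (k:ℝ)/n = 1/n by field_simp; ring,
            abs_of_nonneg (by positivity)]
          ring
  calc |∑ k ∈ Finset.range n, (1 / (n:ℝ) * g (k / n) - ∫ x in ((k:ℝ)/n)..(((k+1:ℕ):ℝ)/n), g x)|
      ≤ ∑ k ∈ Finset.range n, |1 / (n:ℝ) * g (k / n) - ∫ x in ((k:ℝ)/n)..(((k+1:ℕ):ℝ)/n), g x| :=
        Finset.abs_sum_le_sum_abs _ _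
    _ ≤ ∑ _k ∈ Finset.range n, (ε/2)/n := Finset.sum_le_sum key
    _ = ε / 2 := by
        rw [Finset.sum_const, Finset.card_range, nsmul_eq_mul]
        field_simp
    _ < ε := by linarith


/-- Fix `α ≥ 0`. For the nearest-neighbor chain of even
length `n`, the logarithmic negativity between even- and odd-indexed
oscillators is
`N(n) = (1/2) ∑_{k<n/2} |log₂((1+2α(1+cos(2πk/n)))/(1+2α(1−cos(2πk/n))))|`.
Then `N(n)/n` converges, as `n → ∞` through even integers `n = 2m`, to
`(1/(2π)) ∫₀^{π/2} log₂((1+2α(1+cos x))/(1+2α(1−cos x))) dx`; in particular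
the log-negativity grows linearly in the chain length. -/
theorem logneg_even_odd_linear_growth
    (α : ℝ) (hα : 0 ≤ α)
    (N : ℕ → ℝ)
    (hN : ∀ n : ℕ, N n = (1 / 2) * ∑ k ∈ Finset.range (n / 2),
      |Real.logb 2 ((1 + 2 * α * (1 + Real.cos (2 * π * k / n)))
        / (1 + 2 * α * (1 - Real.cos (2 * π * k / n))))|) :
    Tendsto (fun m : ℕ => N (2 * m) / (2 * m : ℕ)) atTop
      (nhds ((1 / (2 * π)) * ∫ x in (0 : ℝ)..(π / 2),
        Real.logb 2 ((1 + 2 * α * (1 + Real.cos x))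
          / (1 + 2 * α * (1 - Real.cos x))))) := by
  set F : ℝ → ℝ := fun x => Real.logb 2 ((1 + 2 * α * (1 + Real.cos x))
      / (1 + 2 * α * (1 - Real.cos x))) with hF
  set G : ℝ → ℝ := fun x => |F x| with hG
  have hA : ∀ x : ℝ, (0:ℝ) < 1 + 2 * α * (1 + Real.cos x) := by
    intro x
    have := Real.neg_one_le_cos x
    nlinarith
  have hB : ∀ x : ℝ, (0:ℝ) < 1 + 2 * α * (1 - Real.cos x) := by
    intro x
    have := Real.cos_le_one x
    nlinarith
  have hRcont : Continuous fun x : ℝ => (1 + 2 * α * (1 + Real.cos x))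
      / (1 + 2 * α * (1 - Real.cos x)) := by
    apply Continuous.div
    · fun_prop
    · fun_prop
    · exact fun x => ne_of_gt (hB x)
  have hFcont : Continuous F := by
    have : Continuous fun x : ℝ => Real.log ((1 + 2 * α * (1 + Real.cos x))
        / (1 + 2 * α * (1 - Real.cos x))) :=
      hRcont.log (fun x => ne_of_gt (div_pos (hA x) (hB x)))
    simpa [hF, Real.logb] using this.div_const (Real.log 2)
  have hGcont : Continuous G := hFcont.abs
  -- symmetry of G about π/2
  have hsym : ∀ x : ℝ, G (π - x) = G x := by
    intro x
    simp only [hG, hF, Real.cos_pi_sub]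
    rw [show (1:ℝ) + 2 * α * (1 + -Real.cos x) = 1 + 2 * α * (1 - Real.cos x) by ring,
      show (1:ℝ) + 2 * α * (1 - -Real.cos x) = 1 + 2 * α * (1 + Real.cos x) by ring]
    rw [Real.logb_div (ne_of_gt (hB x)) (ne_of_gt (hA x)),
      Real.logb_div (ne_of_gt (hA x)) (ne_of_gt (hB x))]
    rw [abs_sub_comm]
  -- Riemann sum convergence for G ∘ (π * ·)
  have hlim := riemann01 (fun x => G (π * x)) (hGcont.comp (continuous_const.mul continuous_id))
  have hlim4 := hlim.const_mul (1/4 : ℝ)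
  -- identify the sequence
  have hseq : ∀ᶠ m : ℕ in atTop, (1/4 : ℝ) *
      ((1 / (m:ℝ)) * ∑ k ∈ Finset.range m, G (π * ((k:ℝ) / m))) = N (2*m) / ((2*m : ℕ) : ℝ) := by
    filter_upwards [eventually_ge_atTop 1] with m hm
    have hmpos : (0:ℝ) < m := by exact_mod_cast hm
    rw [hN (2*m)]
    have h2 : (2*m) / 2 = m := by omega
    rw [h2]
    have harg : ∀ k : ℕ, 2 * π * (k:ℝ) / ((2*m : ℕ) : ℝ) = π * ((k:ℝ) / m) := by
      intro k
      push_cast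
      field_simp
    have hterm : ∀ k : ℕ,
        |Real.logb 2 ((1 + 2 * α * (1 + Real.cos (2 * π * (k:ℝ) / ((2*m : ℕ) : ℝ))))
          / (1 + 2 * α * (1 - Real.cos (2 * π * (k:ℝ) / ((2*m : ℕ) : ℝ)))))|
        = G (π * ((k:ℝ) / m)) := by
      intro k
      simp only [hG, hF]
      rw [harg k]
    rw [Finset.sum_congr rfl (fun k _ => hterm k),
      show ((2*m : ℕ) : ℝ) = 2 * (m:ℝ) by push_cast; ring]
    show 1/4 * (1/(m:ℝ) * ∑ k ∈ Finset.range m, G (π * ((k:ℝ)/m)))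
      = 1/2 * (∑ k ∈ Finset.range m, G (π * ((k:ℝ)/m))) / (2*(m:ℝ))
    generalize (∑ k ∈ Finset.range m, G (π * ((k:ℝ)/m))) = S
    have hm0 : (m:ℝ) ≠ 0 := ne_of_gt hmpos
    field_simp
    ring
  -- identify the limit value
  have hval : (1/4 : ℝ) * ∫ x in (0:ℝ)..1, G (π * x)
      = (1 / (2 * π)) * ∫ x in (0:ℝ)..(π/2), F x := by
    have hπ : (0:ℝ) < π := Real.pi_pos
    have hscale : π • ∫ x in (0:ℝ)..1, G (π * x) = ∫ x in (0:ℝ)..π, G x := by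
      simpa using intervalIntegral.smul_integral_comp_mul_left (a := (0:ℝ)) (b := 1) G π
    have hint1 : IntervalIntegrable G MeasureTheory.volume 0 (π/2) :=
      hGcont.intervalIntegrable _ _
    have hint2 : IntervalIntegrable G MeasureTheory.volume (π/2) π :=
      hGcont.intervalIntegrable _ _
    have hadd : (∫ x in (0:ℝ)..(π/2), G x) + (∫ x in (π/2:ℝ)..π, G x)
        = ∫ x in (0:ℝ)..π, G x :=
      intervalIntegral.integral_add_adjacent_intervals hint1 hint2
    have hrefl : (∫ x in (π/2:ℝ)..π, G x) = ∫ x in (0:ℝ)..(π/2), G x := by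
      have := intervalIntegral.integral_comp_sub_left (a := (0:ℝ)) (b := π/2) G π
      rw [show π - (π/2) = π/2 by ring, show π - (0:ℝ) = π by ring] at this
      rw [← this]
      simp only [hsym]
    have hGF : (∫ x in (0:ℝ)..(π/2), G x) = ∫ x in (0:ℝ)..(π/2), F x := by
      apply intervalIntegral.integral_congr
      intro x hx
      rw [Set.uIcc_of_le (by positivity)] at hx
      have hcos : 0 ≤ Real.cos x :=
        Real.cos_nonneg_of_mem_Icc ⟨by linarith [hx.1, hπ], hx.2⟩
      have hle : (1:ℝ) ≤ (1 + 2 * α * (1 + Real.cos x)) / (1 + 2 * α * (1 - Real.cos x)) := by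
        rw [le_div_iff₀ (hB x)]
        nlinarith
      simp only [hG, hF]
      exact abs_of_nonneg (Real.logb_nonneg (by norm_num) hle)
    have hGint : ∫ x in (0:ℝ)..1, G (π * x) = (1/π) * ∫ x in (0:ℝ)..π, G x := by
      rw [← hscale, smul_eq_mul]
      field_simp
    rw [hGint, ← hadd, hrefl, hGF]
    field_simp
    ring
  rw [← hval]
  exact hlim4.congr' hseq
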